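/- For n ≥ 1, let C_*([0,n]) be the chain complex of abelian groups which in degree k is free on the set of pairs (I, J) with {0, n} ⊆ J ⊆ I ⊆ {0, 1, …, n} and |I ∖ J| = k, with differential d(I, J) = Σ_{j=1}^{l} (−1)^j ( (I ∖ {i_j}, J) − (I, J ∪ {i_j}) ), where I ∖ J = {i_1 < i_2 < ⋯ < i_l}. Then d ∘ d = 0, and the augmentation ε : C_0([0,n]) → ℤ sending each generator (I, I) to 1 induces an isomorphism H_0(C_*([0,n])) ≅ ℤ, while H_k(C_*([0,n])) = 0 for all k ≥ 1. -/

import Mathlib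

/-- `(I, J)` is a generator of degree `(I \ J).card` of the cube complex `C_*([0,n])`:
`{0, n} ⊆ J ⊆ I ⊆ {0, 1, …, n}`. -/
def IsCubeGen (n k : ℕ) (p : Finset ℕ × Finset ℕ) : Prop :=
  0 ∈ p.2 ∧ n ∈ p.2 ∧ p.2 ⊆ p.1 ∧ p.1 ⊆ Finset.range (n + 1) ∧ (p.1 \ p.2).card = k

/-- The set of generators of `C_k([0,n])`. -/
def CubeGen (n k : ℕ) : Type :=
  {p : Finset ℕ × Finset ℕ // IsCubeGen n k p}

/-- The degree-`k` chain group of `C_*([0,n])`: the free abelian group on `CubeGen n k`. -/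
abbrev CubeChain (n k : ℕ) : Type := CubeGen n k →₀ ℤ

lemma IsCubeGen.erase {n k : ℕ} {I J : Finset ℕ} (h : IsCubeGen n (k + 1) (I, J))
    {i : ℕ} (hi : i ∈ I \ J) : IsCubeGen n k (I.erase i, J) := by
  obtain ⟨h0, hn, hJI, hIr, hc⟩ := h
  obtain ⟨hiI, hiJ⟩ := Finset.mem_sdiff.mp hi
  refine ⟨h0, hn, fun j hj => Finset.mem_erase.mpr ⟨fun hji => hiJ (hji ▸ hj), hJI hj⟩,
    (Finset.erase_subset _ _).trans hIr, ?_⟩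
  have hset : I.erase i \ J = (I \ J).erase i := by
    ext x
    simp only [Finset.mem_sdiff, Finset.mem_erase, ne_eq]
    tauto
  rw [hset, Finset.card_erase_of_mem hi, hc]
  omega

lemma IsCubeGen.insertGen {n k : ℕ} {I J : Finset ℕ} (h : IsCubeGen n (k + 1) (I, J))
    {i : ℕ} (hi : i ∈ I \ J) : IsCubeGen n k (I, insert i J) := by
  obtain ⟨h0, hn, hJI, hIr, hc⟩ := h
  obtain ⟨hiI, hiJ⟩ := Finset.mem_sdiff.mp hi
  refine ⟨Finset.mem_insert_of_mem h0, Finset.mem_insert_of_mem hn,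
    Finset.insert_subset_iff.mpr ⟨hiI, hJI⟩, hIr, ?_⟩
  have hset : I \ insert i J = (I \ J).erase i := by
    ext x
    simp only [Finset.mem_sdiff, Finset.mem_erase, Finset.mem_insert, ne_eq]
    tauto
  rw [hset, Finset.card_erase_of_mem hi, hc]
  omega

/-- The value of the differential on a generator `(I, J)` of degree `k + 1`:
with `I \ J = {i₁ < ⋯ < i_l}`, it is
`∑_{j=1}^{l} (−1)^j ((I ∖ {i_j}, J) − (I, J ∪ {i_j}))`; the exponent
`((I \ J).filter (· ≤ i)).card` is exactly the (1-based) position `j` of `i` in `I \ J`. -/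
noncomputable def cubeDGen (n k : ℕ) (x : CubeGen n (k + 1)) : CubeChain n k :=
  ∑ i ∈ (x.1.1 \ x.1.2).attach,
    ((-1 : ℤ) ^ ((x.1.1 \ x.1.2).filter (fun y => y ≤ (i : ℕ))).card) •
      (Finsupp.single ⟨(x.1.1.erase (i : ℕ), x.1.2), x.2.erase i.2⟩ (1 : ℤ) -
        Finsupp.single ⟨(x.1.1, insert (i : ℕ) x.1.2), x.2.insertGen i.2⟩ (1 : ℤ))

/-- The differential `d : C_{k+1}([0,n]) → C_k([0,n])` (ℤ-linear extension of `cubeDGen`). -/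
noncomputable def cubeDiff (n k : ℕ) : CubeChain n (k + 1) →ₗ[ℤ] CubeChain n k :=
  Finsupp.lsum ℤ fun x => LinearMap.toSpanSingleton ℤ (CubeChain n k) (cubeDGen n k x)

/-- The augmentation `ε : C_0([0,n]) → ℤ`, sending each generator `(I, I)` to `1`. -/
noncomputable def cubeAug (n : ℕ) : CubeChain n 0 →ₗ[ℤ] ℤ :=
  Finsupp.lsum ℤ fun _ => (LinearMap.id : ℤ →ₗ[ℤ] ℤ)
namespace CubeWork
open Finset

variable {n k : ℕ}

lemma genEq {n k : ℕ} {p q : Finset ℕ × Finset ℕ} {hp : IsCubeGen n k p}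
    {hq : IsCubeGen n k q} (h : p = q) : (⟨p, hp⟩ : CubeGen n k) = ⟨q, hq⟩ := Subtype.ext h

lemma neg_one_pow_ne {a b : ℕ} (h : a % 2 ≠ b % 2) : (-1 : ℤ) ^ a = -(-1 : ℤ) ^ b := by
  rcases Nat.even_or_odd a with ha | ha
  · have ha' := Nat.even_iff.mp ha
    have hb : Odd b := Nat.odd_iff.mpr (by omega)
    rw [ha.neg_one_pow, hb.neg_one_pow, neg_neg]
  · have ha' := Nat.odd_iff.mp ha
    have hb : Even b := Nat.even_iff.mpr (by omega)
    rw [ha.neg_one_pow, hb.neg_one_pow]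

lemma pos_insert {S : Finset ℕ} {c : ℕ} (hc : c ∉ S) (i : ℕ) :
    ((insert c S).filter (fun y => y ≤ i)).card
      = (S.filter (fun y => y ≤ i)).card + if c ≤ i then 1 else 0 := by
  rw [filter_insert]
  split
  · rw [card_insert_of_notMem (fun hmem => hc (mem_filter.mp hmem).1)]
  · simp

lemma pos_erase {S : Finset ℕ} {i : ℕ} (hi : i ∈ S) (c : ℕ) :
    ((S.erase i).filter (fun y => y ≤ c)).card + (if i ≤ c then 1 else 0)
      = (S.filter (fun y => y ≤ c)).card := by
  rw [filter_erase]
  by_cases hle : i ≤ c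
  · rw [if_pos hle, card_erase_of_mem (s := S.filter (fun y => y ≤ c))
      (mem_filter.mpr ⟨hi, hle⟩)]
    have : 0 < (S.filter (fun y => y ≤ c)).card :=
      card_pos.mpr ⟨i, mem_filter.mpr ⟨hi, hle⟩⟩
    omega
  · have hni : i ∉ S.filter (fun y => y ≤ c) := fun hmem => hle (mem_filter.mp hmem).2
    rw [if_neg hle, erase_eq_of_notMem hni, add_zero]

lemma sdiff_eraseJ {I J : Finset ℕ} (hJI : J ⊆ I) {c : ℕ} (hc : c ∈ J) :
    I \ J.erase c = insert c (I \ J) := by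
  ext a
  constructor
  · intro ha
    obtain ⟨haI, haJ'⟩ := mem_sdiff.mp ha
    by_cases hac : a = c
    · exact hac ▸ mem_insert_self _ _
    · refine mem_insert_of_mem (mem_sdiff.mpr ⟨haI, fun haJ => ?_⟩)
      exact haJ' (mem_erase.mpr ⟨hac, haJ⟩)
  · intro ha
    rcases mem_insert.mp ha with rfl | ha
    · exact mem_sdiff.mpr ⟨hJI hc, notMem_erase _ _⟩
    · obtain ⟨haI, haJ⟩ := mem_sdiff.mp ha
      exact mem_sdiff.mpr ⟨haI, fun h => haJ (erase_subset _ _ h)⟩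

lemma sdiff_eraseBoth {I J : Finset ℕ} {c : ℕ} (hc : c ∈ J) :
    I.erase c \ J.erase c = I \ J := by
  ext a
  constructor
  · intro h
    obtain ⟨haIe, haJe⟩ := mem_sdiff.mp h
    obtain ⟨hac, haI⟩ := mem_erase.mp haIe
    exact mem_sdiff.mpr ⟨haI, fun haJ => haJe (mem_erase.mpr ⟨hac, haJ⟩)⟩
  · intro h
    obtain ⟨haI, haJ⟩ := mem_sdiff.mp h
    have hac : a ≠ c := fun e => haJ (e ▸ hc)
    exact mem_sdiff.mpr ⟨mem_erase.mpr ⟨hac, haI⟩,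
      fun hae => haJ (mem_of_mem_erase hae)⟩

lemma _root_.IsCubeGen.eraseJ {n k : ℕ} {I J : Finset ℕ} (h : IsCubeGen n k (I, J))
    {c : ℕ} (hc : c ∈ J) (hc0 : c ≠ 0) (hcn : c ≠ n) : IsCubeGen n (k + 1) (I, J.erase c) := by
  obtain ⟨h0, hn, hJI, hIr, hcard⟩ := h
  refine ⟨mem_erase.mpr ⟨fun h => hc0 h.symm, h0⟩, mem_erase.mpr ⟨fun h => hcn h.symm, hn⟩,
    (erase_subset _ _).trans hJI, hIr, ?_⟩
  rw [sdiff_eraseJ hJI hc, card_insert_of_notMem (by simp [hc]), hcard]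

lemma _root_.IsCubeGen.eraseBoth {n k : ℕ} {I J : Finset ℕ} (h : IsCubeGen n k (I, J))
    {c : ℕ} (hc : c ∈ J) (hc0 : c ≠ 0) (hcn : c ≠ n) :
    IsCubeGen n k (I.erase c, J.erase c) := by
  obtain ⟨h0, hn, hJI, hIr, hcard⟩ := h
  refine ⟨mem_erase.mpr ⟨fun h => hc0 h.symm, h0⟩, mem_erase.mpr ⟨fun h => hcn h.symm, hn⟩,
    erase_subset_erase _ hJI, (erase_subset _ _).trans hIr, ?_⟩
  rw [sdiff_eraseBoth hc, hcard]

/-- `r_c` on a generator: `0` if `c` is free, collapse `c` to `0` if `c ∈ J`, identity else. -/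
noncomputable def rGen (n k c : ℕ) (hc0 : c ≠ 0) (hcn : c ≠ n) (x : CubeGen n k) :
    CubeChain n k :=
  if h : c ∈ x.1.2 then
    Finsupp.single ⟨(x.1.1.erase c, x.1.2.erase c), x.2.eraseBoth h hc0 hcn⟩ 1
  else if c ∈ x.1.1 then 0 else Finsupp.single x 1

/-- `h_c` on a generator: if `c ∈ J`, free up coordinate `c` with a sign, else `0`. -/
noncomputable def hGen (n k c : ℕ) (hc0 : c ≠ 0) (hcn : c ≠ n) (x : CubeGen n k) :
    CubeChain n (k + 1) :=
  if h : c ∈ x.1.2 then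
    ((-1 : ℤ) ^ (((x.1.1 \ x.1.2.erase c).filter (fun y => y ≤ c)).card + 1)) •
      Finsupp.single ⟨(x.1.1, x.1.2.erase c), x.2.eraseJ h hc0 hcn⟩ 1
  else 0

noncomputable def rMap (n k c : ℕ) (hc0 : c ≠ 0) (hcn : c ≠ n) :
    CubeChain n k →ₗ[ℤ] CubeChain n k :=
  Finsupp.lsum ℤ fun x => LinearMap.toSpanSingleton ℤ _ (rGen n k c hc0 hcn x)

noncomputable def hMap (n k c : ℕ) (hc0 : c ≠ 0) (hcn : c ≠ n) :
    CubeChain n k →ₗ[ℤ] CubeChain n (k + 1) :=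
  Finsupp.lsum ℤ fun x => LinearMap.toSpanSingleton ℤ _ (hGen n k c hc0 hcn x)

lemma cubeDiff_single (x : CubeGen n (k + 1)) (b : ℤ) :
    cubeDiff n k (Finsupp.single x b) = b • cubeDGen n k x := by
  rw [cubeDiff, Finsupp.lsum_single, LinearMap.toSpanSingleton_apply]

lemma rMap_single {c : ℕ} {hc0 : c ≠ 0} {hcn : c ≠ n} (x : CubeGen n k) (b : ℤ) :
    rMap n k c hc0 hcn (Finsupp.single x b) = b • rGen n k c hc0 hcn x := by
  rw [rMap, Finsupp.lsum_single, LinearMap.toSpanSingleton_apply]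

lemma hMap_single {c : ℕ} {hc0 : c ≠ 0} {hcn : c ≠ n} (x : CubeGen n k) (b : ℤ) :
    hMap n k c hc0 hcn (Finsupp.single x b) = b • hGen n k c hc0 hcn x := by
  rw [hMap, Finsupp.lsum_single, LinearMap.toSpanSingleton_apply]

lemma cubeAug_single (x : CubeGen n 0) (b : ℤ) : cubeAug n (Finsupp.single x b) = b := by
  rw [cubeAug, Finsupp.lsum_single]; rfl

end CubeWork
namespace CubeWork
open Finset

variable {n k : ℕ}

lemma single_congr {n k : ℕ} {p q : Finset ℕ × Finset ℕ} {hp : IsCubeGen n k p}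
    {hq : IsCubeGen n k q} (h : p = q) :
    Finsupp.single (⟨p, hp⟩ : CubeGen n k) (1 : ℤ) = Finsupp.single ⟨q, hq⟩ 1 := by
  subst h; rfl

lemma smul_single_congr {n k : ℕ} {p q : Finset ℕ × Finset ℕ} {hp : IsCubeGen n k p}
    {hq : IsCubeGen n k q} {a b : ℤ} (h : p = q) (hab : a = b) :
    a • Finsupp.single (⟨p, hp⟩ : CubeGen n k) (1 : ℤ) = b • Finsupp.single ⟨q, hq⟩ 1 := by
  subst h; subst hab; rfl

lemma smul_sub_single_congr {n k : ℕ} {p₁ q₁ p₂ q₂ : Finset ℕ × Finset ℕ}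
    {hp₁ : IsCubeGen n k p₁} {hq₁ : IsCubeGen n k q₁} {hp₂ : IsCubeGen n k p₂}
    {hq₂ : IsCubeGen n k q₂} {a b : ℤ} (h₁ : p₁ = q₁) (h₂ : p₂ = q₂) (hab : a = b) :
    a • (Finsupp.single (⟨p₁, hp₁⟩ : CubeGen n k) (1 : ℤ) - Finsupp.single ⟨p₂, hp₂⟩ 1)
      = b • (Finsupp.single (⟨q₁, hq₁⟩ : CubeGen n k) 1 - Finsupp.single ⟨q₂, hq₂⟩ 1) := by
  subst h₁; subst h₂; subst hab; rfl

lemma smul_pair_cancel {M : Type*} [AddCommGroup M] [Module ℤ M] {a b : ℕ}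
    (h : a % 2 ≠ b % 2) (v : M) : ((-1 : ℤ) ^ a) • v + ((-1 : ℤ) ^ b) • v = 0 := by
  rw [neg_one_pow_ne h]
  simp

lemma erase_sdiff' (I J : Finset ℕ) (i : ℕ) : I.erase i \ J = (I \ J).erase i := by
  ext a
  simp only [mem_sdiff, mem_erase, ne_eq]
  tauto

lemma sdiff_insert' (I J : Finset ℕ) (i : ℕ) : I \ insert i J = (I \ J).erase i := by
  ext a
  simp only [mem_sdiff, mem_erase, mem_insert, ne_eq, not_or]
  tauto

open scoped Classical in
/-- Total version of a term of the differential. -/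
noncomputable def dterm (n k : ℕ) (I J : Finset ℕ) (i : ℕ) : CubeChain n k :=
  if h : IsCubeGen n (k + 1) (I, J) ∧ i ∈ I \ J then
    ((-1 : ℤ) ^ ((I \ J).filter (fun y => y ≤ i)).card) •
      (Finsupp.single ⟨(I.erase i, J), h.1.erase h.2⟩ 1 -
        Finsupp.single ⟨(I, insert i J), h.1.insertGen h.2⟩ 1)
  else 0

lemma dterm_of_mem {I J : Finset ℕ} (hx : IsCubeGen n (k + 1) (I, J)) {i : ℕ}
    (hi : i ∈ I \ J) :
    dterm n k I J i = ((-1 : ℤ) ^ ((I \ J).filter (fun y => y ≤ i)).card) •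
      (Finsupp.single ⟨(I.erase i, J), hx.erase hi⟩ 1 -
        Finsupp.single ⟨(I, insert i J), hx.insertGen hi⟩ 1) := by
  unfold dterm
  rw [dif_pos ⟨hx, hi⟩]

lemma cubeDGen_eq (x : CubeGen n (k + 1)) :
    cubeDGen n k x = ∑ i ∈ x.1.1 \ x.1.2, dterm n k x.1.1 x.1.2 i := by
  rw [cubeDGen, ← Finset.sum_attach (x.1.1 \ x.1.2) (fun i => dterm n k x.1.1 x.1.2 i)]
  refine Finset.sum_congr rfl fun i _ => ?_
  rw [dterm_of_mem x.2 i.2]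

end CubeWork
namespace CubeWork
open Finset

variable {n k : ℕ}

lemma first_term {c : ℕ} (hc0 : c ≠ 0) (hcn : c ≠ n) {I J : Finset ℕ}
    (hx : IsCubeGen n k (I, J)) (hcJ : c ∈ J) :
    ((-1 : ℤ) ^ (((I \ J.erase c).filter (fun y => y ≤ c)).card + 1)) •
        dterm n k I (J.erase c) c
      = Finsupp.single (α := CubeGen n k) ⟨(I, J), hx⟩ (1 : ℤ)
        - rGen n k c hc0 hcn ⟨(I, J), hx⟩ := by
  have hxJ' : IsCubeGen n (k + 1) (I, J.erase c) := hx.eraseJ hcJ hc0 hcn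
  have hcS' : c ∈ I \ J.erase c := by
    rw [sdiff_eraseJ hx.2.2.1 hcJ]; exact mem_insert_self _ _
  rw [dterm_of_mem hxJ' hcS', smul_smul, ← pow_add]
  have hodd : Odd ((((I \ J.erase c).filter (fun y => y ≤ c)).card + 1)
      + ((I \ J.erase c).filter (fun y => y ≤ c)).card) :=
    ⟨((I \ J.erase c).filter (fun y => y ≤ c)).card, by omega⟩
  rw [hodd.neg_one_pow, neg_smul, one_smul, neg_sub]
  unfold rGen
  rw [dif_pos hcJ]
  congr 1
  · exact single_congr (by rw [insert_erase hcJ])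

lemma key_chain {c : ℕ} (hc0 : c ≠ 0) (hcn : c ≠ n) (x : CubeGen n (k + 1)) :
    cubeDiff n k (rGen n (k + 1) c hc0 hcn x)
      = rMap n k c hc0 hcn (cubeDGen n k x) := by
  obtain ⟨⟨I, J⟩, hx⟩ := x
  erw [cubeDGen_eq]
  dsimp only
  rw [map_sum]
  by_cases hcJ : c ∈ J
  · unfold rGen
    erw [dif_pos hcJ, cubeDiff_single, one_smul, cubeDGen_eq]
    dsimp only
    rw [sdiff_eraseBoth hcJ]
    refine Finset.sum_congr rfl fun i hi => ?_
    have hx' : IsCubeGen n (k + 1) (I.erase c, J.erase c) := hx.eraseBoth hcJ hc0 hcn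
    have hi' : i ∈ I.erase c \ J.erase c := by rw [sdiff_eraseBoth hcJ]; exact hi
    erw [dterm_of_mem hx' hi', dterm_of_mem hx hi, map_smul, map_sub, rMap_single,
      rMap_single, one_smul, one_smul]
    obtain ⟨hiI, hiJ⟩ := mem_sdiff.mp hi
    have hic : i ≠ c := fun e => hiJ (e ▸ hcJ)
    unfold rGen
    rw [dif_pos (show c ∈ J from hcJ), dif_pos (show c ∈ insert i J from mem_insert_of_mem hcJ)]
    rw [smul_sub, smul_sub]
    congr 1
    · exact smul_single_congr (by rw [erase_right_comm]) (by rw [sdiff_eraseBoth hcJ])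
    · exact smul_single_congr (by rw [erase_insert_of_ne hic]) (by rw [sdiff_eraseBoth hcJ])
  · by_cases hcI : c ∈ I
    · unfold rGen
      rw [dif_neg hcJ, if_pos hcI, map_zero]
      symm
      refine Finset.sum_eq_zero fun i hi => ?_
      erw [dterm_of_mem hx hi, map_smul, map_sub, rMap_single, rMap_single, one_smul, one_smul]
      by_cases hic : i = c
      · subst hic
        unfold rGen
        rw [dif_neg (show ¬ i ∈ J from hcJ), if_neg (notMem_erase i I),
          dif_pos (mem_insert_self i J)]
        erw [show Finsupp.single (⟨(I.erase i, (insert i J).erase i),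
            ((hx.insertGen hi).eraseBoth (mem_insert_self i J) hc0 hcn)⟩ : CubeGen n k) (1:ℤ)
            = Finsupp.single ⟨(I.erase i, J), hx.erase hi⟩ 1 from
          single_congr (by rw [erase_insert hcJ])]
        erw [sub_self, smul_zero]
      · have hciJ : ¬ c ∈ insert i J := by
          intro h
          rcases mem_insert.mp h with h | h
          · exact hic h.symm
          · exact hcJ h
        unfold rGen
        rw [dif_neg hcJ, if_pos (mem_erase.mpr ⟨fun e => hic e.symm, hcI⟩),
          dif_neg hciJ, if_pos hcI]
        rw [sub_self, smul_zero]
    · unfold rGen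
      erw [dif_neg hcJ, if_neg hcI, cubeDiff_single, one_smul, cubeDGen_eq]
      dsimp only
      refine Finset.sum_congr rfl fun i hi => ?_
      erw [dterm_of_mem hx hi, map_smul, map_sub, rMap_single, rMap_single, one_smul, one_smul]
      have hiI := (mem_sdiff.mp hi).1
      have hic : c ≠ i := fun e => hcI (e ▸ hiI)
      have hciJ : ¬ c ∈ insert i J := by
        intro h
        rcases mem_insert.mp h with h | h
        · exact hic h
        · exact hcJ h
      unfold rGen
      rw [dif_neg hcJ, if_neg (fun h => hcI (mem_of_mem_erase h)), dif_neg hciJ, if_neg hcI]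

end CubeWork
namespace CubeWork
open Finset

variable {n k : ℕ}

lemma key_zero {c : ℕ} (hc0 : c ≠ 0) (hcn : c ≠ n) (x : CubeGen n 0) :
    cubeDiff n 0 (hGen n 0 c hc0 hcn x)
      = Finsupp.single (α := CubeGen n 0) x (1 : ℤ) - rGen n 0 c hc0 hcn x := by
  obtain ⟨⟨I, J⟩, hx⟩ := x
  have hS : I \ J = ∅ := card_eq_zero.mp hx.2.2.2.2
  by_cases hcJ : c ∈ J
  · unfold hGen
    erw [dif_pos hcJ, map_smul, cubeDiff_single, one_smul, cubeDGen_eq]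
    dsimp only
    rw [sdiff_eraseJ hx.2.2.1 hcJ, hS, Finset.sum_insert (notMem_empty c),
      Finset.sum_empty, add_zero]
    have := first_term (n := n) (k := 0) hc0 hcn hx hcJ
    rw [sdiff_eraseJ hx.2.2.1 hcJ, hS] at this
    exact this
  · unfold hGen
    rw [dif_neg hcJ, map_zero]
    have hcI : c ∉ I := by
      intro hcI
      have : c ∈ I \ J := mem_sdiff.mpr ⟨hcI, hcJ⟩
      rw [hS] at this
      exact notMem_empty c this
    unfold rGen
    rw [dif_neg hcJ, if_neg hcI, sub_self]

lemma key_succ {c : ℕ} (hc0 : c ≠ 0) (hcn : c ≠ n) (x : CubeGen n (k + 1)) :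
    cubeDiff n (k + 1) (hGen n (k + 1) c hc0 hcn x)
        + hMap n k c hc0 hcn (cubeDGen n k x)
      = Finsupp.single (α := CubeGen n (k + 1)) x (1 : ℤ)
        - rGen n (k + 1) c hc0 hcn x := by
  obtain ⟨⟨I, J⟩, hx⟩ := x
  erw [cubeDGen_eq]
  dsimp only
  rw [map_sum]
  by_cases hcJ : c ∈ J
  · -- main case
    have hxJ' : IsCubeGen n (k + 2) (I, J.erase c) := hx.eraseJ hcJ hc0 hcn
    have hcS : c ∉ I \ J := fun h => (mem_sdiff.mp h).2 hcJ
    have hS' : I \ J.erase c = insert c (I \ J) := sdiff_eraseJ hx.2.2.1 hcJ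
    unfold hGen
    erw [dif_pos hcJ, map_smul, cubeDiff_single, one_smul, cubeDGen_eq]
    dsimp only
    rw [show (∑ i ∈ I \ J.erase c, dterm n (k + 1) I (J.erase c) i)
        = dterm n (k + 1) I (J.erase c) c + ∑ i ∈ I \ J, dterm n (k + 1) I (J.erase c) i by
      rw [hS', Finset.sum_insert hcS]]
    rw [smul_add, Finset.smul_sum, add_assoc, ← Finset.sum_add_distrib]
    have hzero : ∑ i ∈ I \ J,
        (((-1 : ℤ) ^ (((I \ J.erase c).filter (fun y => y ≤ c)).card + 1)) •
            dterm n (k + 1) I (J.erase c) i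
          + hMap n k c hc0 hcn (dterm n k I J i)) = 0 := by
      refine Finset.sum_eq_zero fun i hi => ?_
      obtain ⟨hiI, hiJ⟩ := mem_sdiff.mp hi
      have hic : i ≠ c := fun e => hiJ (e ▸ hcJ)
      have hiS' : i ∈ I \ J.erase c := by rw [hS']; exact mem_insert_of_mem hi
      erw [dterm_of_mem hxJ' hiS', dterm_of_mem hx hi, map_smul, map_sub,
        hMap_single, hMap_single, one_smul, one_smul]
      have hface0 : hGen n k c hc0 hcn ⟨(I.erase i, J), hx.erase hi⟩
          = ((-1 : ℤ) ^ ((((I \ J.erase c).erase i).filter (fun y => y ≤ c)).card + 1)) •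
            Finsupp.single (α := CubeGen n (k + 1))
              ⟨(I.erase i, J.erase c), hxJ'.erase hiS'⟩ 1 := by
        unfold hGen
        rw [dif_pos (show c ∈ J from hcJ)]
        exact smul_single_congr rfl (by rw [erase_sdiff'])
      have hface1 : hGen n k c hc0 hcn ⟨(I, insert i J), hx.insertGen hi⟩
          = ((-1 : ℤ) ^ ((((I \ J.erase c).erase i).filter (fun y => y ≤ c)).card + 1)) •
            Finsupp.single (α := CubeGen n (k + 1))
              ⟨(I, insert i (J.erase c)), hxJ'.insertGen hiS'⟩ 1 := by
        unfold hGen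
        rw [dif_pos (show c ∈ insert i J from mem_insert_of_mem hcJ)]
        exact smul_single_congr (by rw [erase_insert_of_ne hic])
          (by rw [erase_insert_of_ne hic, sdiff_insert'])
      rw [hface0, hface1, ← smul_sub, smul_smul, smul_smul, ← pow_add, ← pow_add]
      have E1 : ((I \ J.erase c).filter (fun y => y ≤ i)).card
          = ((I \ J).filter (fun y => y ≤ i)).card + if c ≤ i then 1 else 0 := by
        rw [hS']; exact pos_insert hcS i
      have E2 : (((I \ J.erase c).erase i).filter (fun y => y ≤ c)).card
            + (if i ≤ c then 1 else 0)
          = ((I \ J.erase c).filter (fun y => y ≤ c)).card := pos_erase hiS' c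
      by_cases hci : c ≤ i
      · rw [if_pos hci] at E1
        rw [if_neg (by omega)] at E2
        exact smul_pair_cancel (by omega) _
      · rw [if_neg hci] at E1
        rw [if_pos (by omega)] at E2
        exact smul_pair_cancel (by omega) _
    rw [hzero, add_zero]
    exact first_term hc0 hcn hx hcJ
  · unfold hGen
    rw [dif_neg hcJ, map_zero, zero_add]
    by_cases hcI : c ∈ I
    · have hcS : c ∈ I \ J := mem_sdiff.mpr ⟨hcI, hcJ⟩
      have hr : rGen n (k + 1) c hc0 hcn ⟨(I, J), hx⟩ = 0 := by
        unfold rGen; rw [dif_neg hcJ, if_pos hcI]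
      rw [hr, sub_zero]
      rw [Finset.sum_eq_single_of_mem c hcS (fun i hi hic => ?_)]
      · erw [dterm_of_mem hx hcS, map_smul, map_sub, hMap_single, hMap_single,
          one_smul, one_smul]
        have h0 : hGen n k c hc0 hcn ⟨(I.erase c, J), hx.erase hcS⟩ = 0 := by
          unfold hGen; rw [dif_neg (show ¬ c ∈ J from hcJ)]
        have h1 : hGen n k c hc0 hcn ⟨(I, insert c J), hx.insertGen hcS⟩
            = ((-1 : ℤ) ^ (((I \ J).filter (fun y => y ≤ c)).card + 1)) •
              Finsupp.single (α := CubeGen n (k + 1)) ⟨(I, J), hx⟩ 1 := by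
          unfold hGen
          rw [dif_pos (mem_insert_self c J)]
          exact smul_single_congr (by rw [erase_insert hcJ]) (by rw [erase_insert hcJ])
        rw [h0, h1, zero_sub, smul_neg, smul_smul, ← pow_add]
        have hodd : Odd (((I \ J).filter (fun y => y ≤ c)).card
            + (((I \ J).filter (fun y => y ≤ c)).card + 1)) :=
          ⟨((I \ J).filter (fun y => y ≤ c)).card, by omega⟩
        rw [hodd.neg_one_pow]
        simp
      · erw [dterm_of_mem hx hi, map_smul, map_sub, hMap_single, hMap_single,
          one_smul, one_smul]
        have hciJ : ¬ c ∈ insert i J := by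
          intro h
          rcases mem_insert.mp h with h | h
          · exact hic h.symm
          · exact hcJ h
        have h0 : hGen n k c hc0 hcn ⟨(I.erase i, J), hx.erase hi⟩ = 0 := by
          unfold hGen; rw [dif_neg (show ¬ c ∈ J from hcJ)]
        have h1 : hGen n k c hc0 hcn ⟨(I, insert i J), hx.insertGen hi⟩ = 0 := by
          unfold hGen; rw [dif_neg hciJ]
        rw [h0, h1, sub_self, smul_zero]
    · have hr : rGen n (k + 1) c hc0 hcn ⟨(I, J), hx⟩
          = Finsupp.single (α := CubeGen n (k + 1)) ⟨(I, J), hx⟩ 1 := by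
        unfold rGen; rw [dif_neg hcJ, if_neg hcI]
      rw [hr, sub_self]
      refine Finset.sum_eq_zero fun i hi => ?_
      erw [dterm_of_mem hx hi, map_smul, map_sub, hMap_single, hMap_single,
        one_smul, one_smul]
      have hiI := (mem_sdiff.mp hi).1
      have hic : c ≠ i := fun e => hcI (e ▸ hiI)
      have hciJ : ¬ c ∈ insert i J := by
        intro h
        rcases mem_insert.mp h with h | h
        · exact hic h
        · exact hcJ h
      have h0 : hGen n k c hc0 hcn ⟨(I.erase i, J), hx.erase hi⟩ = 0 := by
        unfold hGen; rw [dif_neg (show ¬ c ∈ J from hcJ)]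
      have h1 : hGen n k c hc0 hcn ⟨(I, insert i J), hx.insertGen hi⟩ = 0 := by
        unfold hGen; rw [dif_neg hciJ]
      rw [h0, h1, sub_self, smul_zero]

end CubeWork
namespace CubeWork
open Finset

variable {n k : ℕ}

lemma key_dd (x : CubeGen n (k + 2)) :
    cubeDiff n k (cubeDiff n (k + 1) (Finsupp.single x (1 : ℤ))) = 0 := by
  obtain ⟨⟨I, J⟩, hx⟩ := x
  rw [cubeDiff_single (k := k + 1) ⟨(I, J), hx⟩, one_smul, cubeDGen_eq ⟨(I, J), hx⟩]
  dsimp only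
  rw [map_sum]
  have hterm : ∀ i ∈ I \ J, cubeDiff n k (dterm n (k + 1) I J i)
      = ∑ i' ∈ (I \ J).erase i,
          ((-1 : ℤ) ^ (((I \ J).filter (fun y => y ≤ i)).card)) •
            (dterm n k (I.erase i) J i' - dterm n k I (insert i J) i') := by
    intro i hi
    rw [dterm_of_mem hx hi, map_smul, map_sub]
    rw [cubeDiff_single ⟨(I.erase i, J), hx.erase hi⟩,
      cubeDiff_single ⟨(I, insert i J), hx.insertGen hi⟩,
      one_smul, one_smul, cubeDGen_eq ⟨(I.erase i, J), hx.erase hi⟩,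
      cubeDGen_eq ⟨(I, insert i J), hx.insertGen hi⟩]
    dsimp only
    rw [erase_sdiff', sdiff_insert', ← Finset.sum_sub_distrib, Finset.smul_sum]
  rw [Finset.sum_congr rfl hterm, Finset.sum_sigma']
  refine Finset.sum_involution (fun a _ => ⟨a.2, a.1⟩) ?_ ?_ ?_ ?_
  · rintro ⟨i, i'⟩ ha
    obtain ⟨hi, hi'e⟩ := mem_sigma.mp ha
    have hne : i' ≠ i := (mem_erase.mp hi'e).1
    have hi' : i' ∈ I \ J := mem_of_mem_erase hi'e
    dsimp only
    -- generators
    have hg0 : IsCubeGen n (k + 1) (I.erase i, J) := hx.erase hi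
    have hg1 : IsCubeGen n (k + 1) (I, insert i J) := hx.insertGen hi
    have hg0' : IsCubeGen n (k + 1) (I.erase i', J) := hx.erase hi'
    have hg1' : IsCubeGen n (k + 1) (I, insert i' J) := hx.insertGen hi'
    have m0 : i' ∈ I.erase i \ J := by rw [erase_sdiff']; exact hi'e
    have m1 : i' ∈ I \ insert i J := by rw [sdiff_insert']; exact hi'e
    have m0' : i ∈ I.erase i' \ J := by
      rw [erase_sdiff']; exact mem_erase.mpr ⟨hne.symm, hi⟩
    have m1' : i ∈ I \ insert i' J := by
      rw [sdiff_insert']; exact mem_erase.mpr ⟨hne.symm, hi⟩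
    have E1 : dterm n k (I.erase i) J i'
        = ((-1 : ℤ) ^ ((((I \ J).erase i).filter (fun y => y ≤ i')).card)) •
          (Finsupp.single (α := CubeGen n k) ⟨((I.erase i).erase i', J), hg0.erase m0⟩ 1
            - Finsupp.single ⟨(I.erase i, insert i' J), hg0.insertGen m0⟩ 1) := by
      rw [dterm_of_mem hg0 m0]
      exact smul_sub_single_congr rfl rfl (by rw [erase_sdiff'])
    have E2 : dterm n k I (insert i J) i'
        = ((-1 : ℤ) ^ ((((I \ J).erase i).filter (fun y => y ≤ i')).card)) •
          (Finsupp.single (α := CubeGen n k) ⟨(I.erase i', insert i J), hg1.erase m1⟩ 1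
            - Finsupp.single ⟨(I, insert i' (insert i J)), hg1.insertGen m1⟩ 1) := by
      rw [dterm_of_mem hg1 m1]
      exact smul_sub_single_congr rfl rfl (by rw [sdiff_insert'])
    have E1' : dterm n k (I.erase i') J i
        = ((-1 : ℤ) ^ ((((I \ J).erase i').filter (fun y => y ≤ i)).card)) •
          (Finsupp.single (α := CubeGen n k) ⟨((I.erase i).erase i', J), hg0.erase m0⟩ 1
            - Finsupp.single ⟨(I.erase i', insert i J), hg1.erase m1⟩ 1) := by
      rw [dterm_of_mem hg0' m0']
      exact smul_sub_single_congr (by rw [erase_right_comm]) rfl (by rw [erase_sdiff'])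
    have E2' : dterm n k I (insert i' J) i
        = ((-1 : ℤ) ^ ((((I \ J).erase i').filter (fun y => y ≤ i)).card)) •
          (Finsupp.single (α := CubeGen n k) ⟨(I.erase i, insert i' J), hg0.insertGen m0⟩ 1
            - Finsupp.single ⟨(I, insert i' (insert i J)), hg1.insertGen m1⟩ 1) := by
      rw [dterm_of_mem hg1' m1']
      exact smul_sub_single_congr rfl (by rw [Finset.insert_comm]) (by rw [sdiff_insert'])
    rw [E1, E2, E1', E2', ← smul_sub, ← smul_sub, smul_smul, smul_smul, ← pow_add, ← pow_add]
    rw [sub_sub_sub_comm]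
    have P1 : (((I \ J).erase i).filter (fun y => y ≤ i')).card + (if i ≤ i' then 1 else 0)
        = ((I \ J).filter (fun y => y ≤ i')).card := pos_erase hi i'
    have P2 : (((I \ J).erase i').filter (fun y => y ≤ i)).card + (if i' ≤ i then 1 else 0)
        = ((I \ J).filter (fun y => y ≤ i)).card := pos_erase hi' i
    by_cases hii : i ≤ i'
    · rw [if_pos hii] at P1
      rw [if_neg (fun h => hne (le_antisymm h hii))] at P2
      exact smul_pair_cancel (by omega) _
    · rw [if_neg hii] at P1
      rw [if_pos (by omega)] at P2
      exact smul_pair_cancel (by omega) _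
  · rintro ⟨i, i'⟩ ha _
    intro h
    exact (mem_erase.mp (mem_sigma.mp ha).2).1 (congrArg Sigma.fst h)
  · rintro ⟨i, i'⟩ ha
    obtain ⟨hi, hi'e⟩ := mem_sigma.mp ha
    exact mem_sigma.mpr ⟨mem_of_mem_erase hi'e,
      mem_erase.mpr ⟨(mem_erase.mp hi'e).1.symm, hi⟩⟩
  · rintro ⟨i, i'⟩ ha
    rfl

lemma dd_map (k : ℕ) : (cubeDiff n k).comp (cubeDiff n (k + 1)) = 0 := by
  apply Finsupp.lhom_ext
  intro x b
  rw [← Finsupp.smul_single_one, LinearMap.comp_apply, map_smul, map_smul, key_dd,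
    smul_zero, LinearMap.zero_apply]

lemma aug_d : (cubeAug n).comp (cubeDiff n 0) = 0 := by
  apply Finsupp.lhom_ext
  intro x b
  rw [← Finsupp.smul_single_one, LinearMap.comp_apply, map_smul, map_smul,
    LinearMap.zero_apply]
  obtain ⟨⟨I, J⟩, hx⟩ := x
  erw [cubeDiff_single, one_smul, cubeDGen_eq]
  dsimp only
  rw [map_sum, Finset.sum_eq_zero, smul_zero]
  intro i hi
  rw [dterm_of_mem hx hi, map_smul, map_sub]
  erw [cubeAug_single, cubeAug_single,
    sub_self, smul_zero]

lemma homotopy_succ_map {c : ℕ} (hc0 : c ≠ 0) (hcn : c ≠ n) (k : ℕ) :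
    (cubeDiff n (k + 1)).comp (hMap n (k + 1) c hc0 hcn)
        + (hMap n k c hc0 hcn).comp (cubeDiff n k)
      = LinearMap.id - rMap n (k + 1) c hc0 hcn := by
  apply Finsupp.lhom_ext
  intro x b
  rw [← Finsupp.smul_single_one]
  simp only [LinearMap.add_apply, LinearMap.comp_apply, LinearMap.sub_apply,
    LinearMap.id_apply, map_smul]
  congr 1
  rw [hMap_single, one_smul, cubeDiff_single, one_smul, rMap_single, one_smul]
  exact key_succ hc0 hcn x

lemma homotopy_zero_map {c : ℕ} (hc0 : c ≠ 0) (hcn : c ≠ n) :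
    (cubeDiff n 0).comp (hMap n 0 c hc0 hcn)
      = LinearMap.id - rMap n 0 c hc0 hcn := by
  apply Finsupp.lhom_ext
  intro x b
  rw [← Finsupp.smul_single_one]
  simp only [LinearMap.comp_apply, LinearMap.sub_apply, LinearMap.id_apply, map_smul]
  congr 1
  rw [hMap_single, one_smul, rMap_single, one_smul]
  exact key_zero hc0 hcn x

lemma rchain_map {c : ℕ} (hc0 : c ≠ 0) (hcn : c ≠ n) (k : ℕ) :
    (cubeDiff n k).comp (rMap n (k + 1) c hc0 hcn)
      = (rMap n k c hc0 hcn).comp (cubeDiff n k) := by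
  apply Finsupp.lhom_ext
  intro x b
  rw [← Finsupp.smul_single_one]
  simp only [LinearMap.comp_apply, map_smul]
  congr 1
  rw [rMap_single, one_smul, cubeDiff_single, one_smul]
  exact key_chain hc0 hcn x

end CubeWork
namespace CubeWork
open Finset

variable {n k : ℕ}

noncomputable def rT (c n k : ℕ) : CubeChain n k →ₗ[ℤ] CubeChain n k :=
  if h : c ≠ 0 ∧ c ≠ n then rMap n k c h.1 h.2 else LinearMap.id

noncomputable def hT (c n k : ℕ) : CubeChain n k →ₗ[ℤ] CubeChain n (k + 1) :=
  if h : c ≠ 0 ∧ c ≠ n then hMap n k c h.1 h.2 else 0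

noncomputable def Rf (n : ℕ) : ℕ → ∀ k, CubeChain n k →ₗ[ℤ] CubeChain n k
  | 0, _ => LinearMap.id
  | m + 1, k => (rT (m + 1) n k).comp (Rf n m k)

noncomputable def Hf (n : ℕ) : ℕ → ∀ k, CubeChain n k →ₗ[ℤ] CubeChain n (k + 1)
  | 0, _ => 0
  | m + 1, k => Hf n m k + (hT (m + 1) n k).comp (Rf n m k)

lemma rT_chain (c k : ℕ) :
    (cubeDiff n k).comp (rT c n (k + 1)) = (rT c n k).comp (cubeDiff n k) := by
  unfold rT
  by_cases h : c ≠ 0 ∧ c ≠ n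
  · rw [dif_pos h, dif_pos h]; exact rchain_map h.1 h.2 k
  · rw [dif_neg h, dif_neg h, LinearMap.comp_id, LinearMap.id_comp]

lemma hT_succ (c k : ℕ) :
    (cubeDiff n (k + 1)).comp (hT c n (k + 1)) + (hT c n k).comp (cubeDiff n k)
      = LinearMap.id - rT c n (k + 1) := by
  unfold hT rT
  by_cases h : c ≠ 0 ∧ c ≠ n
  · rw [dif_pos h, dif_pos h, dif_pos h]; exact homotopy_succ_map h.1 h.2 k
  · rw [dif_neg h, dif_neg h, dif_neg h]; simp

lemma hT_zero (c : ℕ) :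
    (cubeDiff n 0).comp (hT c n 0) = LinearMap.id - rT c n 0 := by
  unfold hT rT
  by_cases h : c ≠ 0 ∧ c ≠ n
  · rw [dif_pos h, dif_pos h]; exact homotopy_zero_map h.1 h.2
  · rw [dif_neg h, dif_neg h]; simp

lemma Rf_chain (m k : ℕ) :
    (cubeDiff n k).comp (Rf n m (k + 1)) = (Rf n m k).comp (cubeDiff n k) := by
  induction m with
  | zero => rw [Rf, Rf, LinearMap.comp_id, LinearMap.id_comp]
  | succ m ih =>
    show (cubeDiff n k).comp ((rT (m + 1) n (k + 1)).comp (Rf n m (k + 1))) = _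
    rw [← LinearMap.comp_assoc, rT_chain, LinearMap.comp_assoc, ih,
      ← LinearMap.comp_assoc]
    rfl

lemma Hf_homotopy_succ (m k : ℕ) :
    (cubeDiff n (k + 1)).comp (Hf n m (k + 1)) + (Hf n m k).comp (cubeDiff n k)
      = LinearMap.id - Rf n m (k + 1) := by
  induction m with
  | zero =>
    show (cubeDiff n (k + 1)).comp 0 + (0 : _ →ₗ[ℤ] _).comp (cubeDiff n k)
      = LinearMap.id - LinearMap.id
    simp
  | succ m ih =>
    show (cubeDiff n (k + 1)).comp
          (Hf n m (k + 1) + (hT (m + 1) n (k + 1)).comp (Rf n m (k + 1)))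
        + (Hf n m k + (hT (m + 1) n k).comp (Rf n m k)).comp (cubeDiff n k)
      = LinearMap.id - Rf n (m + 1) (k + 1)
    rw [LinearMap.comp_add, LinearMap.add_comp]
    have hC : (cubeDiff n (k + 1)).comp ((hT (m + 1) n (k + 1)).comp (Rf n m (k + 1)))
        = ((cubeDiff n (k + 1)).comp (hT (m + 1) n (k + 1))).comp (Rf n m (k + 1)) :=
      (LinearMap.comp_assoc _ _ _).symm
    have hD : ((hT (m + 1) n k).comp (Rf n m k)).comp (cubeDiff n k)
        = ((hT (m + 1) n k).comp (cubeDiff n k)).comp (Rf n m (k + 1)) := by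
      rw [LinearMap.comp_assoc, ← Rf_chain, ← LinearMap.comp_assoc]
    have hsum : ((cubeDiff n (k + 1)).comp (hT (m + 1) n (k + 1))).comp (Rf n m (k + 1))
          + ((hT (m + 1) n k).comp (cubeDiff n k)).comp (Rf n m (k + 1))
        = Rf n m (k + 1) - Rf n (m + 1) (k + 1) := by
      rw [← LinearMap.add_comp, hT_succ, LinearMap.sub_comp, LinearMap.id_comp]
      rfl
    rw [hC, hD]
    have rearr : ((cubeDiff n (k + 1)).comp (Hf n m (k + 1))
          + ((cubeDiff n (k + 1)).comp (hT (m + 1) n (k + 1))).comp (Rf n m (k + 1)))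
        + ((Hf n m k).comp (cubeDiff n k)
          + ((hT (m + 1) n k).comp (cubeDiff n k)).comp (Rf n m (k + 1)))
        = ((cubeDiff n (k + 1)).comp (Hf n m (k + 1)) + (Hf n m k).comp (cubeDiff n k))
          + (((cubeDiff n (k + 1)).comp (hT (m + 1) n (k + 1))).comp (Rf n m (k + 1))
            + ((hT (m + 1) n k).comp (cubeDiff n k)).comp (Rf n m (k + 1))) := by
      abel
    rw [rearr, ih, hsum]
    abel

lemma Hf_homotopy_zero (m : ℕ) :
    (cubeDiff n 0).comp (Hf n m 0) = LinearMap.id - Rf n m 0 := by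
  induction m with
  | zero =>
    show (cubeDiff n 0).comp 0 = LinearMap.id - LinearMap.id
    simp
  | succ m ih =>
    show (cubeDiff n 0).comp (Hf n m 0 + (hT (m + 1) n 0).comp (Rf n m 0))
      = LinearMap.id - Rf n (m + 1) 0
    rw [LinearMap.comp_add, ih, ← LinearMap.comp_assoc, hT_zero,
      LinearMap.sub_comp, LinearMap.id_comp]
    have : (rT (m + 1) n 0).comp (Rf n m 0) = Rf n (m + 1) 0 := rfl
    rw [this]
    abel

lemma rT_keeps (c' : ℕ) (x : CubeGen n k) {c : ℕ} (hc : c ∈ x.1.1 \ x.1.2) :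
    rT c' n k (Finsupp.single x 1) = 0
      ∨ ∃ y : CubeGen n k, rT c' n k (Finsupp.single x 1) = Finsupp.single y 1
          ∧ c ∈ y.1.1 \ y.1.2 := by
  unfold rT
  by_cases h : c' ≠ 0 ∧ c' ≠ n
  · rw [dif_pos h, rMap_single, one_smul]
    obtain ⟨⟨I, J⟩, hx⟩ := x
    unfold rGen
    by_cases hcJ : c' ∈ J
    · rw [dif_pos hcJ]
      right
      refine ⟨_, rfl, ?_⟩
      show c ∈ I.erase c' \ J.erase c'
      rw [sdiff_eraseBoth hcJ]
      exact hc
    · by_cases hcI : c' ∈ I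
      · rw [dif_neg hcJ, if_pos hcI]
        left; rfl
      · rw [dif_neg hcJ, if_neg hcI]
        right; exact ⟨_, rfl, hc⟩
  · rw [dif_neg h, LinearMap.id_apply]
    right; exact ⟨x, rfl, hc⟩

lemma Rf_keeps (m : ℕ) (x : CubeGen n k) {c : ℕ} (hc : c ∈ x.1.1 \ x.1.2) :
    Rf n m k (Finsupp.single x 1) = 0
      ∨ ∃ y : CubeGen n k, Rf n m k (Finsupp.single x 1) = Finsupp.single y 1
          ∧ c ∈ y.1.1 \ y.1.2 := by
  induction m with
  | zero => right; exact ⟨x, rfl, hc⟩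
  | succ m ih =>
    have hstep : Rf n (m + 1) k (Finsupp.single x 1)
        = rT (m + 1) n k (Rf n m k (Finsupp.single x 1)) := rfl
    rcases ih with h0 | ⟨y, hy, hcy⟩
    · left; rw [hstep, h0, map_zero]
    · rw [hstep, hy]
      exact rT_keeps (m + 1) y hcy

lemma Rf_kills (m : ℕ) (x : CubeGen n k) {c : ℕ} (hc : c ∈ x.1.1 \ x.1.2)
    (hc1 : 1 ≤ c) (hcm : c ≤ m) : Rf n m k (Finsupp.single x 1) = 0 := by
  induction m with
  | zero => omega
  | succ m ih =>
    show (rT (m + 1) n k) (Rf n m k (Finsupp.single x 1)) = 0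
    by_cases hcm' : c ≤ m
    · rw [ih hcm', map_zero]
    · have hceq : c = m + 1 := by omega
      rcases Rf_keeps m x hc with h0 | ⟨y, hy, hcy⟩
      · rw [h0, map_zero]
      · rw [hy]
        obtain ⟨hcI, hcJ⟩ := mem_sdiff.mp hcy
        have hcn : c ≠ n := fun e => hcJ (e ▸ y.2.2.1)
        subst hceq
        unfold rT
        rw [dif_pos ⟨by omega, hcn⟩, rMap_single, one_smul]
        obtain ⟨⟨I, J⟩, hy2⟩ := y
        unfold rGen
        rw [dif_neg hcJ, if_pos hcI]

lemma Rf_top_pos (k : ℕ) : Rf n (n - 1) (k + 1) = 0 := by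
  apply Finsupp.lhom_ext
  intro x b
  rw [← Finsupp.smul_single_one, map_smul, LinearMap.zero_apply]
  have hne : (x.1.1 \ x.1.2).Nonempty := by
    apply card_pos.mp
    rw [x.2.2.2.2.2]
    omega
  obtain ⟨c, hc⟩ := hne
  have hcJ := (mem_sdiff.mp hc).2
  have hc0 : c ≠ 0 := fun e => hcJ (e ▸ x.2.1)
  have hcn : c ≠ n := fun e => hcJ (e ▸ x.2.2.1)
  have hcr : c < n + 1 := mem_range.mp (x.2.2.2.2.1 (mem_sdiff.mp hc).1)
  rw [Rf_kills (n - 1) x hc (by omega) (by omega), smul_zero]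

end CubeWork
namespace CubeWork
open Finset

variable {n k : ℕ}

lemma filter_step (I : Finset ℕ) (m : ℕ) :
    (I.filter (fun a => a = 0 ∨ m < a)).erase (m + 1)
      = I.filter (fun a => a = 0 ∨ m + 1 < a) := by
  ext a
  simp only [mem_erase, mem_filter, ne_eq]
  constructor
  · rintro ⟨hne, haI, h⟩
    exact ⟨haI, by omega⟩
  · rintro ⟨haI, h⟩
    exact ⟨by omega, haI, by omega⟩

lemma genFilter {I : Finset ℕ} (hI : IsCubeGen n 0 (I, I)) {m : ℕ} (hm : m < n) :
    IsCubeGen n 0 (I.filter (fun a => a = 0 ∨ m < a), I.filter (fun a => a = 0 ∨ m < a)) :=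
  ⟨mem_filter.mpr ⟨hI.1, Or.inl rfl⟩, mem_filter.mpr ⟨hI.2.1, Or.inr hm⟩,
    Finset.Subset.refl _, (filter_subset _ _).trans hI.2.2.2.1,
    by rw [Finset.sdiff_self]; simp⟩

lemma Rf_deg0 (m : ℕ) (hm : m < n) (I : Finset ℕ) (hI : IsCubeGen n 0 (I, I)) :
    Rf n m 0 (Finsupp.single ⟨(I, I), hI⟩ 1)
      = Finsupp.single (α := CubeGen n 0) ⟨_, genFilter hI hm⟩ 1 := by
  induction m with
  | zero =>
    show (LinearMap.id : CubeChain n 0 →ₗ[ℤ] CubeChain n 0) _ = _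
    rw [LinearMap.id_apply]
    have h : I.filter (fun a => a = 0 ∨ 0 < a) = I :=
      filter_true_of_mem (fun a _ => by omega)
    exact single_congr (by rw [h])
  | succ m ih =>
    have hstep : Rf n (m + 1) 0 (Finsupp.single ⟨(I, I), hI⟩ 1)
        = rT (m + 1) n 0 (Rf n m 0 (Finsupp.single ⟨(I, I), hI⟩ 1)) := rfl
    rw [hstep, ih (by omega)]
    unfold rT
    erw [dif_pos ⟨by omega, by omega⟩, rMap_single, one_smul]
    unfold rGen
    by_cases hmem : (m + 1) ∈ I.filter (fun a => a = 0 ∨ m < a)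
    · rw [dif_pos hmem]
      exact single_congr (by rw [filter_step])
    · rw [dif_neg hmem, if_neg hmem]
      exact single_congr (by rw [← filter_step, erase_eq_of_notMem hmem])

lemma vtx_gen (hn : 1 ≤ n) : IsCubeGen n 0 ({0, n}, {0, n}) := by
  refine ⟨mem_insert_self _ _, by simp, Finset.Subset.refl _, ?_, by rw [Finset.sdiff_self]; simp⟩
  intro a ha
  rcases mem_insert.mp ha with rfl | h
  · exact mem_range.mpr (by omega)
  · rw [mem_singleton] at h
    subst h
    exact mem_range.mpr (by omega)

lemma filter_final (hn : 1 ≤ n) {I : Finset ℕ} (hI : IsCubeGen n 0 (I, I)) :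
    I.filter (fun a => a = 0 ∨ n - 1 < a) = {0, n} := by
  ext a
  simp only [mem_filter, mem_insert, mem_singleton]
  constructor
  · rintro ⟨haI, h⟩
    have : a < n + 1 := mem_range.mp (hI.2.2.2.1 haI)
    omega
  · rintro (rfl | rfl)
    · exact ⟨hI.1, Or.inl rfl⟩
    · exact ⟨hI.2.1, Or.inr (by omega)⟩

lemma Rf_aug (hn : 1 ≤ n) :
    Rf n (n - 1) 0 = (LinearMap.toSpanSingleton ℤ (CubeChain n 0)
        (Finsupp.single ⟨({0, n}, {0, n}), vtx_gen hn⟩ 1)).comp (cubeAug n) := by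
  apply Finsupp.lhom_ext
  intro x b
  rw [← Finsupp.smul_single_one, map_smul, map_smul]
  congr 1
  rw [LinearMap.comp_apply, cubeAug_single, LinearMap.toSpanSingleton_apply, one_smul]
  obtain ⟨⟨I, J⟩, hx⟩ := x
  have hIJ : I ⊆ J := sdiff_eq_empty_iff_subset.mp (card_eq_zero.mp hx.2.2.2.2)
  have hJI : J = I := Finset.Subset.antisymm hx.2.2.1 hIJ
  have hx' : IsCubeGen n 0 (I, I) := by rw [hJI] at hx; exact hx
  have e : (⟨(I, J), hx⟩ : CubeGen n 0) = ⟨(I, I), hx'⟩ := genEq (by rw [hJI])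
  rw [e, Rf_deg0 (n - 1) (by omega) I hx']
  exact single_congr (by rw [filter_final hn hx'])

end CubeWork
/-- For `n ≥ 1`: the differential of the cube complex `C_*([0,n])` satisfies `d ∘ d = 0`;
the augmentation `ε` is surjective with kernel the image of `d : C_1 → C_0`
(so `ε` induces `H_0(C_*([0,n])) ≅ ℤ`); and `H_k(C_*([0,n])) = 0` for all `k ≥ 1`,
i.e. `ker (d : C_{k+1} → C_k) = im (d : C_{k+2} → C_{k+1})`. -/
theorem stmt_12 (n : ℕ) (hn : 1 ≤ n) :
    (∀ k : ℕ, (cubeDiff n k).comp (cubeDiff n (k + 1)) = 0) ∧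
    Function.Surjective (cubeAug n) ∧
    LinearMap.ker (cubeAug n) = LinearMap.range (cubeDiff n 0) ∧
    (∀ k : ℕ, LinearMap.ker (cubeDiff n k) = LinearMap.range (cubeDiff n (k + 1))) := by
  refine ⟨fun k => CubeWork.dd_map k, ?_, ?_, ?_⟩
  · intro z
    exact ⟨Finsupp.single ⟨({0, n}, {0, n}), CubeWork.vtx_gen hn⟩ z,
      CubeWork.cubeAug_single _ z⟩
  · apply le_antisymm
    · intro u hu
      rw [LinearMap.mem_ker] at hu
      refine ⟨CubeWork.Hf n (n - 1) 0 u, ?_⟩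
      have h := LinearMap.congr_fun (CubeWork.Hf_homotopy_zero (n := n) (n - 1)) u
      rw [LinearMap.comp_apply, LinearMap.sub_apply, LinearMap.id_apply] at h
      have hR : CubeWork.Rf n (n - 1) 0 u = 0 := by
        rw [CubeWork.Rf_aug hn, LinearMap.comp_apply, hu, map_zero]
      rw [h, hR, sub_zero]
    · rintro u ⟨w, rfl⟩
      rw [LinearMap.mem_ker, ← LinearMap.comp_apply, CubeWork.aug_d,
        LinearMap.zero_apply]
  · intro k
    apply le_antisymm
    · intro u hu
      rw [LinearMap.mem_ker] at hu
      refine ⟨CubeWork.Hf n (n - 1) (k + 1) u, ?_⟩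
      have h := LinearMap.congr_fun (CubeWork.Hf_homotopy_succ (n := n) (n - 1) k) u
      rw [LinearMap.add_apply, LinearMap.comp_apply, LinearMap.comp_apply,
        LinearMap.sub_apply, LinearMap.id_apply, hu, map_zero, add_zero,
        CubeWork.Rf_top_pos, LinearMap.zero_apply, sub_zero] at h
      exact h
    · rintro u ⟨w, rfl⟩
      rw [LinearMap.mem_ker, ← LinearMap.comp_apply, CubeWork.dd_map,
        LinearMap.zero_apply]
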